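/- If F is an algebraic extension of 𝔽_p, then the polynomial ring F[x₁,...,xₙ] in any finite number of variables is hereditarily atomic. -/

import Mathlib

open MvPolynomial

/-- Units of a multivariate polynomial ring over a field are nonzero constants. -/
lemma mvPoly_units_eq_C (F : Type*) [Field F] : ∀ (n : ℕ) (q : MvPolynomial (Fin n) F),
    IsUnit q → ∃ c : F, c ≠ 0 ∧ C c = q := by
  intro n
  induction n with
  | zero =>
    intro q hq
    refine ⟨constantCoeff q, ?_, ?_⟩
    · intro h
      have h2 := hq.map (constantCoeff (σ := Fin 0) (R := F))
      rw [h] at h2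
      exact not_isUnit_zero h2
    · exact (eq_C_of_isEmpty q).symm
  | succ n ih =>
    intro q hq
    have h2 : IsUnit (finSuccEquiv F n q) := hq.map (finSuccEquiv F n)
    obtain ⟨r, hr, hrq⟩ := Polynomial.isUnit_iff.mp h2
    obtain ⟨c, hc, hcr⟩ := ih r hr
    refine ⟨c, hc, ?_⟩
    apply (finSuccEquiv F n).injective
    rw [← hrq, ← hcr]
    exact (finSuccEquiv F n).commutes c

/-- A nonzero element of a field of characteristic `p` that is integral over `ℤ`
is a root of unity. -/
lemma pow_eq_one_of_int (F : Type*) [Field F] (p : ℕ) (hp : p.Prime) [CharP F p]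
    (c : F) (hc : c ≠ 0) (hint : IsIntegral ℤ c) : ∃ m : ℕ, 0 < m ∧ c ^ m = 1 := by
  have := Fact.mk hp
  letI : Algebra (ZMod p) F := ZMod.algebra F p
  have hci : IsIntegral (ZMod p) c := hint.tower_top
  let K := IntermediateField.adjoin (ZMod p) ({c} : Set F)
  haveI : FiniteDimensional (ZMod p) K := IntermediateField.adjoin.finiteDimensional hci
  haveI : Finite K := Module.finite_of_finite (ZMod p)
  haveI : Fintype K := Fintype.ofFinite K
  have hcK : c ∈ K := IntermediateField.subset_adjoin _ _ rfl
  set x : K := ⟨c, hcK⟩ with hx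
  have hx0 : x ≠ 0 := fun h => hc (by simpa [hx] using congrArg (Subtype.val) h)
  have hpow : x ^ (Fintype.card K - 1) = 1 := FiniteField.pow_card_sub_one_eq_one x hx0
  refine ⟨Fintype.card K - 1, ?_, ?_⟩
  · have : 1 < Fintype.card K := Fintype.one_lt_card
    omega
  · have := congrArg (Subtype.val) hpow
    simpa using this

/-- An integral domain (here: commutative ring) is atomic if every nonzero nonunit
is a finite product of irreducible elements. -/
def AtomicRing (R : Type*) [CommRing R] : Prop :=
  ∀ a : R, a ≠ 0 → ¬IsUnit a →
    ∃ l : Multiset R, (∀ b ∈ l, Irreducible b) ∧ l.prod = a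

/-- A ring satisfies the ascending chain condition on principal ideals (ACCP) if
every ascending chain of principal ideals stabilizes. -/
def RingACCP (R : Type*) [CommRing R] : Prop :=
  ∀ f : ℕ → R, (∀ n, Ideal.span {f n} ≤ Ideal.span {f (n + 1)}) →
    ∃ N, ∀ n, N ≤ n → Ideal.span {f n} = Ideal.span {f N}

/-- If F is an algebraic extension of 𝔽_p, then F[x₁,...,xₙ] is hereditarily atomic. -/
theorem mvPolynomial_hereditarily_atomic (F : Type*) [Field F] (p : ℕ) (hp : p.Prime)
    [CharP F p] (halg : ∀ x : F, IsIntegral ℤ x) (n : ℕ)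
    (S : Subring (MvPolynomial (Fin n) F)) : AtomicRing S := by
  -- A unit of the ambient ring lying in `S` is a unit of `S`.
  have unit_lift : ∀ x : S, IsUnit (x : MvPolynomial (Fin n) F) → IsUnit x := by
    intro x hx
    obtain ⟨c, hc, hcx⟩ := mvPoly_units_eq_C F n _ hx
    obtain ⟨m, hm, hcm⟩ := pow_eq_one_of_int F p hp c hc (halg c)
    have hxm : x ^ m = 1 := by
      have : ((x : MvPolynomial (Fin n) F)) ^ m = 1 := by
        rw [← hcx, ← C_pow, hcm, C_1]
      exact_mod_cast Subtype.ext (by push_cast; exact this)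
    obtain ⟨m, rfl⟩ : ∃ k, m = k + 1 := ⟨m - 1, by omega⟩
    exact IsUnit.of_mul_eq_one (a := x) (x ^ m) (by rw [← pow_succ']; exact hxm)
  haveI : WfDvdMonoid S := by
    constructor
    refine Subrelation.wf ?_ (InvImage.wf
      (fun x : S => (x : MvPolynomial (Fin n) F)) wellFounded_dvdNotUnit)
    rintro a b ⟨hb0, x, hx, rfl⟩
    refine ⟨fun h => hb0 (Subtype.ext h), x,
      fun hu => hx (unit_lift x hu), by push_cast; ring⟩
  intro a ha hu
  obtain ⟨f, hf, hfa, -⟩ := (WfDvdMonoid.not_unit_iff_exists_factors_eq a ha).mp hu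
  exact ⟨f, hf, hfa⟩
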